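/- (Resistance between identified well-separated clusters) Let G be a connected weighted graph and C1, C2 disjoint vertex sets such that (i) the effective resistance between any two vertices within C1 is at most R and likewise within C2, and (ii) the effective resistance between every vertex of C1 and every vertex of C2 is at least γR for some γ > 4. Let J be the graph obtained from G by identifying C1 to a single vertex s and C2 to a single vertex t. Then Reff_J(s,t) ≥ (γ - 4) R. -/

import Mathlib

open Matrix

/-- The signed indicator vector `χ_x - χ_y`. -/
def incv {V : Type*} [DecidableEq V] (x y : V) : V → ℝ := fun v =>
  (if v = x then 1 else 0) - (if v = y then 1 else 0)

/-- Weighted Laplacian of the multigraph whose edge `e` has endpoints `a e`, `b e`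
and conductance `c e`. -/
noncomputable def lapM {V E : Type*} [DecidableEq V] [Fintype E]
    (a b : E → V) (c : E → ℝ) : Matrix V V ℝ :=
  ∑ e, c e • Matrix.vecMulVec (incv (a e) (b e)) (incv (a e) (b e))

/-- `M` is the Moore–Penrose pseudoinverse of `L`. -/
def IsMPInv {V : Type*} [Fintype V] (L M : Matrix V V ℝ) : Prop :=
  L * M * L = L ∧ M * L * M = M ∧ (L * M)ᵀ = L * M ∧ (M * L)ᵀ = M * L

/-- Connectivity of a weighted graph, encoded as: the kernel of its Laplacian
consists exactly of the constant vectors. -/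
def LapConnected {V : Type*} [Fintype V] (L : Matrix V V ℝ) : Prop :=
  ∀ x : V → ℝ, L.mulVec x = 0 → ∃ t : ℝ, ∀ v, x v = t

section Aux

set_option linter.unusedSectionVars false

variable {V E : Type*} [Fintype V] [DecidableEq V] [Fintype E]

lemma incv_dot (x y : V) (g : V → ℝ) : incv x y ⬝ᵥ g = g x - g y := by
  simp [incv, dotProduct, sub_mul, Finset.sum_sub_distrib, ite_mul]

lemma lapM_mulVec (a b : E → V) (c : E → ℝ) (x : V → ℝ) :
    (lapM a b c).mulVec x
      = ∑ e, (c e * (incv (a e) (b e) ⬝ᵥ x)) • incv (a e) (b e) := by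
  funext v
  simp only [lapM, Matrix.mulVec, dotProduct, Matrix.sum_apply, Matrix.smul_apply,
    Matrix.vecMulVec_apply, smul_eq_mul, Finset.sum_apply, Pi.smul_apply,
    Finset.sum_mul, Finset.mul_sum]
  rw [Finset.sum_comm]
  apply Finset.sum_congr rfl; intro e _
  apply Finset.sum_congr rfl; intro w _
  ring

lemma dotProduct_finset_sum {ι : Type*} (s : Finset ι) (x : V → ℝ) (f : ι → V → ℝ) :
    x ⬝ᵥ (∑ e ∈ s, f e) = ∑ e ∈ s, x ⬝ᵥ f e := by
  simp only [dotProduct, Finset.sum_apply, Finset.mul_sum]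
  exact Finset.sum_comm

lemma dot_lapM (a b : E → V) (c : E → ℝ) (x y : V → ℝ) :
    x ⬝ᵥ (lapM a b c).mulVec y
      = ∑ e, c e * (incv (a e) (b e) ⬝ᵥ x) * (incv (a e) (b e) ⬝ᵥ y) := by
  rw [lapM_mulVec, dotProduct_finset_sum]
  refine Finset.sum_congr rfl fun e _ => ?_
  rw [dotProduct_smul, smul_eq_mul, dotProduct_comm x]
  ring

lemma lapM_transpose (a b : E → V) (c : E → ℝ) : (lapM a b c)ᵀ = lapM a b c := by
  simp only [lapM, Matrix.transpose_sum, Matrix.transpose_smul]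
  refine Finset.sum_congr rfl fun e _ => ?_
  congr 1
  ext i j
  simp [Matrix.vecMulVec_apply, mul_comm]

lemma lapM_quad_nonneg (a b : E → V) (c : E → ℝ) (hc : ∀ e, 0 ≤ c e) (x : V → ℝ) :
    0 ≤ x ⬝ᵥ (lapM a b c).mulVec x := by
  rw [dot_lapM]
  refine Finset.sum_nonneg fun e _ => ?_
  have := hc e
  nlinarith [sq_nonneg (incv (a e) (b e) ⬝ᵥ x)]

lemma edge_zero_of_quad_zero (a b : E → V) (c : E → ℝ) (hc : ∀ e, 0 < c e) (x : V → ℝ)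
    (h : x ⬝ᵥ (lapM a b c).mulVec x = 0) : ∀ e, incv (a e) (b e) ⬝ᵥ x = 0 := by
  rw [dot_lapM] at h
  have h0 : ∀ e ∈ (Finset.univ : Finset E),
      c e * (incv (a e) (b e) ⬝ᵥ x) * (incv (a e) (b e) ⬝ᵥ x) = 0 := by
    rw [← Finset.sum_eq_zero_iff_of_nonneg]
    · exact h
    · intro e _
      have := (hc e).le
      nlinarith [sq_nonneg (incv (a e) (b e) ⬝ᵥ x)]
  intro e
  have h1 := h0 e (Finset.mem_univ e)
  rw [mul_assoc] at h1
  rcases mul_eq_zero.mp h1 with h2 | h2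
  · exact absurd h2 (hc e).ne'
  · exact mul_self_eq_zero.mp h2

lemma lapM_mulVec_zero_of_quad_zero (a b : E → V) (c : E → ℝ) (hc : ∀ e, 0 < c e) (x : V → ℝ)
    (h : x ⬝ᵥ (lapM a b c).mulVec x = 0) : (lapM a b c).mulVec x = 0 := by
  rw [lapM_mulVec]
  refine Finset.sum_eq_zero fun e _ => ?_
  rw [edge_zero_of_quad_zero a b c hc x h e]
  simp

lemma sum_lapM_mulVec (a b : E → V) (c : E → ℝ) (x : V → ℝ) :
    ∑ v, (lapM a b c).mulVec x v = 0 := by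
  rw [lapM_mulVec]
  simp only [Finset.sum_apply, Pi.smul_apply, smul_eq_mul]
  rw [Finset.sum_comm]
  refine Finset.sum_eq_zero fun e _ => ?_
  rw [← Finset.mul_sum]
  have : ∑ v, incv (a e) (b e) v = 0 := by
    simp [incv, Finset.sum_sub_distrib]
  rw [this, mul_zero]

lemma mpinv_unique (L M N : Matrix V V ℝ) (hM : IsMPInv L M) (hN : IsMPInv L N) :
    M = N := by
  obtain ⟨hM1, hM2, hM3, hM4⟩ := hM
  obtain ⟨hN1, hN2, hN3, hN4⟩ := hN
  have key1 : (L * N) * (L * M) = L * M := by rw [← Matrix.mul_assoc, hN1]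
  have key2 : (L * N) * (L * M) = L * N := by
    calc (L * N) * (L * M) = (L * N)ᵀ * (L * M)ᵀ := by rw [hN3, hM3]
    _ = ((L * M * L) * N)ᵀ := by simp only [Matrix.transpose_mul, Matrix.mul_assoc]
    _ = (L * N)ᵀ := by rw [hM1]
    _ = L * N := hN3
  have hLN : L * N = L * M := key2.symm.trans key1
  have key3 : (M * L) * (N * L) = M * L := by
    rw [Matrix.mul_assoc, ← Matrix.mul_assoc L N L, hN1]
  have key4 : (M * L) * (N * L) = N * L := by
    calc (M * L) * (N * L) = (M * L)ᵀ * (N * L)ᵀ := by rw [hM4, hN4]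
    _ = (N * (L * M * L))ᵀ := by simp only [Matrix.transpose_mul, Matrix.mul_assoc]
    _ = (N * L)ᵀ := by rw [hM1]
    _ = N * L := hN4
  have hNL : N * L = M * L := key4.symm.trans key3
  calc M = M * L * M := hM2.symm
  _ = (N * L) * M := by rw [hNL]
  _ = N * (L * M) := by rw [Matrix.mul_assoc]
  _ = N * (L * N) := by rw [hLN]
  _ = N * L * N := by rw [Matrix.mul_assoc]
  _ = N := hN2

lemma mpinv_symm (L M : Matrix V V ℝ) (hL : Lᵀ = L) (h : IsMPInv L M) : Mᵀ = M := by
  obtain ⟨h1, h2, h3, h4⟩ := h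
  have hT : IsMPInv L Mᵀ := by
    refine ⟨?_, ?_, ?_, ?_⟩
    · have e : L * Mᵀ * L = (L * M * L)ᵀ := by
        simp only [Matrix.transpose_mul, hL, Matrix.mul_assoc]
      rw [e, h1, hL]
    · have e : Mᵀ * L * Mᵀ = (M * L * M)ᵀ := by
        simp only [Matrix.transpose_mul, hL, Matrix.mul_assoc]
      rw [e, h2]
    · have e : L * Mᵀ = (M * L)ᵀ := by rw [Matrix.transpose_mul, hL]
      rw [e, Matrix.transpose_transpose, h4]
    · have e : Mᵀ * L = (L * M)ᵀ := by rw [Matrix.transpose_mul, hL]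
      rw [e, Matrix.transpose_transpose, h3]
  exact mpinv_unique L Mᵀ M hT ⟨h1, h2, h3, h4⟩

lemma dual_bound (L M : Matrix V V ℝ) (hL : Lᵀ = L)
    (hpsd : ∀ x, 0 ≤ x ⬝ᵥ L.mulVec x) (bv q : V → ℝ)
    (hb : L.mulVec (M.mulVec bv) = bv) :
    2 * (bv ⬝ᵥ q) - q ⬝ᵥ L.mulVec q ≤ bv ⬝ᵥ M.mulVec bv := by
  set p := M.mulVec bv with hp
  have symmdot : ∀ u w : V → ℝ, u ⬝ᵥ L.mulVec w = w ⬝ᵥ L.mulVec u := by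
    intro u w
    rw [Matrix.dotProduct_mulVec, ← Matrix.mulVec_transpose, hL, dotProduct_comm]
  have h1 : bv ⬝ᵥ p = p ⬝ᵥ L.mulVec p := by
    conv_lhs => rw [← hb]
    exact dotProduct_comm _ _
  have h2 : bv ⬝ᵥ q = p ⬝ᵥ L.mulVec q := by
    conv_lhs => rw [← hb]
    rw [dotProduct_comm]
    exact symmdot q p
  have expand : (q - p) ⬝ᵥ L.mulVec (q - p)
      = (q ⬝ᵥ L.mulVec q - p ⬝ᵥ L.mulVec q) - (p ⬝ᵥ L.mulVec q - p ⬝ᵥ L.mulVec p) := by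
    rw [Matrix.mulVec_sub, dotProduct_sub, sub_dotProduct, sub_dotProduct, symmdot q p]
  have hq := hpsd (q - p)
  rw [expand] at hq
  linarith

lemma adj_dot (A : Matrix V V ℝ) (u w : V → ℝ) :
    (A.mulVec u) ⬝ᵥ w = u ⬝ᵥ Aᵀ.mulVec w := by
  rw [dotProduct_comm, Matrix.dotProduct_mulVec, ← Matrix.mulVec_transpose,
    dotProduct_comm]

lemma mp_range [Nonempty V] (a b : E → V) (c : E → ℝ) (hc : ∀ e, 0 < c e)
    (hconn : LapConnected (lapM a b c)) (M : Matrix V V ℝ)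
    (hM : IsMPInv (lapM a b c) M) (bv : V → ℝ) (hsum : ∑ v, bv v = 0) :
    (lapM a b c).mulVec (M.mulVec bv) = bv := by
  obtain ⟨hM1, hM2, hM3, hM4⟩ := hM
  have horth : ∀ z, ((lapM a b c).mulVec (M.mulVec bv) - bv) ⬝ᵥ (lapM a b c).mulVec z = 0 := by
    intro z
    have e1 : ((lapM a b c).mulVec (M.mulVec bv)) ⬝ᵥ (lapM a b c).mulVec z
        = bv ⬝ᵥ (lapM a b c).mulVec z := by
      rw [Matrix.mulVec_mulVec, adj_dot, hM3, Matrix.mulVec_mulVec, hM1]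
    rw [sub_dotProduct, e1, sub_self]
  have hz : (lapM a b c).mulVec ((lapM a b c).mulVec (M.mulVec bv) - bv) = 0 :=
    lapM_mulVec_zero_of_quad_zero a b c hc _ (horth _)
  obtain ⟨t0, ht0⟩ := hconn _ hz
  have hsum2 : ∑ v, ((lapM a b c).mulVec (M.mulVec bv) - bv) v = 0 := by
    simp only [Pi.sub_apply, Finset.sum_sub_distrib, hsum, sub_zero]
    exact sum_lapM_mulVec a b c _
  have ht00 : t0 = 0 := by
    have : ∑ v, ((lapM a b c).mulVec (M.mulVec bv) - bv) v = (Fintype.card V : ℝ) * t0 := by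
      rw [Finset.sum_congr rfl fun v _ => ht0 v]
      simp [Finset.card_univ, mul_comm]
    rw [hsum2] at this
    have hcard : 0 < (Fintype.card V : ℝ) := by
      exact_mod_cast Fintype.card_pos
    field_simp at this
    exact (mul_eq_zero.mp this.symm).resolve_left hcard.ne'
  funext v
  have hv0 := ht0 v
  rw [ht00] at hv0
  have : (lapM a b c).mulVec (M.mulVec bv) v - bv v = 0 := hv0
  linarith

end Aux

lemma clamp_bound (lo hi s t : ℝ) :
    (min hi (max lo s) - min hi (max lo t)) ^ 2
      ≤ (min hi (max lo s) - min hi (max lo t)) * (s - t) := by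
  simp only [min_def, max_def]
  split_ifs <;> nlinarith

/-- **Resistance between identified well-separated clusters.**  If `C1` and
`C2` both have effective resistance diameter at most `R` and are at effective
resistance distance at least `γR` (`γ > 4`), then after identifying `C1` to `s`
and `C2` to `t` the effective resistance between `s` and `t` is at least
`(γ-4)R`. -/
theorem reff_identified_well_separated_clusters
    {V W E : Type*} [Fintype V] [DecidableEq V] [Fintype W] [DecidableEq W] [Fintype E]
    (a b : E → V) (c : E → ℝ) (hc : ∀ e, 0 < c e)
    (hconn : LapConnected (lapM a b c))
    (Lp : Matrix V V ℝ) (hLp : IsMPInv (lapM a b c) Lp)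
    (C1 C2 : Finset V) (hdis : Disjoint C1 C2) (h1 : C1.Nonempty) (h2 : C2.Nonempty)
    (R γ : ℝ) (hγ : 4 < γ)
    (hd1 : ∀ x ∈ C1, ∀ y ∈ C1, incv x y ⬝ᵥ Lp.mulVec (incv x y) ≤ R)
    (hd2 : ∀ x ∈ C2, ∀ y ∈ C2, incv x y ⬝ᵥ Lp.mulVec (incv x y) ≤ R)
    (hcross : ∀ x ∈ C1, ∀ y ∈ C2, γ * R ≤ incv x y ⬝ᵥ Lp.mulVec (incv x y))
    (π : V → W) (s t : W) (hπsurj : Function.Surjective π)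
    (hs : ∀ x, π x = s ↔ x ∈ C1) (ht : ∀ x, π x = t ↔ x ∈ C2)
    (hπ : ∀ x y, π x = π y ↔ (x = y ∨ (x ∈ C1 ∧ y ∈ C1) ∨ (x ∈ C2 ∧ y ∈ C2)))
    (LpJ : Matrix W W ℝ)
    (hLpJ : IsMPInv (lapM (fun e => π (a e)) (fun e => π (b e)) c) LpJ) :
    (γ - 4) * R ≤ incv s t ⬝ᵥ LpJ.mulVec (incv s t) := by
  classical
  obtain ⟨u, hu⟩ := h1
  obtain ⟨v, hv⟩ := h2
  haveI hVne : Nonempty V := ⟨u⟩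
  haveI hWne : Nonempty W := ⟨s⟩
  -- basic facts
  have hR0 : 0 ≤ R := by
    have h := hd1 u hu u hu
    have hz : incv u u = 0 := by funext w; simp [incv]
    rw [hz] at h
    simpa using h
  -- J is connected
  have hconnJ : LapConnected (lapM (fun e => π (a e)) (fun e => π (b e)) c) := by
    intro x hx
    have hq : x ⬝ᵥ (lapM (fun e => π (a e)) (fun e => π (b e)) c).mulVec x = 0 := by
      rw [hx]; simp
    have hz := edge_zero_of_quad_zero _ _ c hc x hq
    have hLz : (lapM a b c).mulVec (x ∘ π) = 0 := by
      rw [lapM_mulVec]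
      refine Finset.sum_eq_zero fun e _ => ?_
      have hze : incv (a e) (b e) ⬝ᵥ (x ∘ π) = 0 := by
        rw [incv_dot]
        have h' := hz e
        rw [incv_dot] at h'
        simpa using h'
      rw [hze]
      simp
    obtain ⟨t0, ht0⟩ := hconn (x ∘ π) hLz
    exact ⟨t0, fun w => by obtain ⟨x0, rfl⟩ := hπsurj w; exact ht0 x0⟩
  -- symmetry facts
  have hLsym : (lapM a b c)ᵀ = lapM a b c := lapM_transpose a b c
  have hLJsym : (lapM (fun e => π (a e)) (fun e => π (b e)) c)ᵀ
      = lapM (fun e => π (a e)) (fun e => π (b e)) c := lapM_transpose _ _ c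
  have hLpsym : Lpᵀ = Lp := mpinv_symm _ Lp hLsym hLp
  -- polarization identity for Lp
  have hsymdot : ∀ yv zv : V → ℝ, yv ⬝ᵥ Lp.mulVec zv = zv ⬝ᵥ Lp.mulVec yv := by
    intro yv zv
    rw [Matrix.dotProduct_mulVec, ← Matrix.mulVec_transpose, hLpsym, dotProduct_comm]
  have hpolar : ∀ yv zv : V → ℝ, 2 * (yv ⬝ᵥ Lp.mulVec zv)
      = yv ⬝ᵥ Lp.mulVec yv + zv ⬝ᵥ Lp.mulVec zv - (yv - zv) ⬝ᵥ Lp.mulVec (yv - zv) := by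
    intro yv zv
    rw [Matrix.mulVec_sub, dotProduct_sub, sub_dotProduct, sub_dotProduct, hsymdot zv yv]
    ring
  -- the potential vector
  set P : V → ℝ := Lp.mulVec (incv u v) with hPdef
  have hLPb : (lapM a b c).mulVec P = incv u v := by
    rw [hPdef]
    refine mp_range a b c hc hconn Lp hLp (incv u v) ?_
    simp [incv, Finset.sum_sub_distrib]
  have hRuv : γ * R ≤ incv u v ⬝ᵥ P := by
    have h' := hcross u hu v hv
    rw [← hPdef] at h'
    exact h'
  have hPuv : incv u v ⬝ᵥ P = P u - P v := incv_dot u v P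
  -- potential bounds on the clusters
  have hC1p : ∀ x ∈ C1, 2 * (P u - P x) ≤ R + incv u v ⬝ᵥ P - γ * R := by
    intro x hx
    have key := hpolar (incv u x) (incv u v)
    have e2 : incv u x - incv u v = -incv x v := by
      funext w
      simp only [incv, Pi.sub_apply, Pi.neg_apply]
      ring
    rw [e2, Matrix.mulVec_neg, dotProduct_neg, neg_dotProduct, neg_neg, ← hPdef] at key
    have e1 : incv u x ⬝ᵥ P = P u - P x := incv_dot u x P
    have e3 : incv u v ⬝ᵥ P = incv u v ⬝ᵥ P := rfl
    have hA := hd1 u hu x hx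
    have hB := hcross x hx v hv
    -- key : 2 * (incv u x ⬝ᵥ P) = N(ux) + incv u v ⬝ᵥ P - N(xv)
    rw [e1] at key
    linarith
  have hC2p : ∀ y ∈ C2, 2 * (P y - P v) ≤ R + incv u v ⬝ᵥ P - γ * R := by
    intro y hy
    have key := hpolar (incv y v) (incv u v)
    have e2 : incv y v - incv u v = -incv u y := by
      funext w
      simp only [incv, Pi.sub_apply, Pi.neg_apply]
      ring
    rw [e2, Matrix.mulVec_neg, dotProduct_neg, neg_dotProduct, neg_neg, ← hPdef] at key
    have e1 : incv y v ⬝ᵥ P = P y - P v := incv_dot y v P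
    have hA := hd2 y hy v hv
    have hB := hcross u hu y hy
    rw [e1] at key
    linarith
  -- clamping thresholds
  set D : ℝ := (R + incv u v ⬝ᵥ P - γ * R) / 2 with hD
  have hD0 : 0 ≤ D := by rw [hD]; linarith
  have hlohi : P v + D ≤ P u - D := by
    have : (γ - 1) * R ≥ 0 := by nlinarith
    rw [hD]
    linarith
  set f : V → ℝ := fun x => min (P u - D) (max (P v + D) (P x)) with hf
  have hfC1 : ∀ x ∈ C1, f x = P u - D := by
    intro x hx
    have h' := hC1p x hx
    have hx1 : P u - D ≤ P x := by rw [hD]; linarith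
    have : P u - D ≤ max (P v + D) (P x) := le_trans hx1 (le_max_right _ _)
    rw [hf]
    exact min_eq_left this
  have hfC2 : ∀ y ∈ C2, f y = P v + D := by
    intro y hy
    have h' := hC2p y hy
    have hy1 : P y ≤ P v + D := by rw [hD]; linarith
    rw [hf]
    simp only
    rw [max_eq_left hy1, min_eq_right hlohi]
  have hfu : f u = P u - D := by
    have : P u - D ≤ max (P v + D) (P u) := le_trans (by linarith) (le_max_right _ _)
    rw [hf]; exact min_eq_left this
  have hfv : f v = P v + D := by
    rw [hf]
    simp only
    rw [max_eq_left (by linarith), min_eq_right hlohi]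
  -- the quotient potential
  set q : W → ℝ := fun w => f (Function.surjInv hπsurj w) with hqdef
  have hqπ : ∀ x, q (π x) = f x := by
    intro x
    have hx' : π (Function.surjInv hπsurj (π x)) = π x := Function.surjInv_eq hπsurj (π x)
    rcases (hπ _ _).mp hx' with h | ⟨ha', hb'⟩ | ⟨ha', hb'⟩
    · rw [hqdef]; simp only; rw [h]
    · rw [hqdef]; simp only; rw [hfC1 _ ha', hfC1 _ hb']
    · rw [hqdef]; simp only; rw [hfC2 _ ha', hfC2 _ hb']
  -- energy bound
  have henergy : q ⬝ᵥ (lapM (fun e => π (a e)) (fun e => π (b e)) c).mulVec q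
      ≤ f ⬝ᵥ (lapM a b c).mulVec P := by
    rw [dot_lapM, dot_lapM]
    refine Finset.sum_le_sum fun e _ => ?_
    have hedge : incv (π (a e)) (π (b e)) ⬝ᵥ q = f (a e) - f (b e) := by
      rw [incv_dot, hqπ, hqπ]
    have hfp : incv (a e) (b e) ⬝ᵥ f = f (a e) - f (b e) := incv_dot _ _ f
    have hpp : incv (a e) (b e) ⬝ᵥ P = P (a e) - P (b e) := incv_dot _ _ P
    rw [hedge, hfp, hpp]
    have hcl := clamp_bound (P v + D) (P u - D) (P (a e)) (P (b e))
    have hfa : f (a e) = min (P u - D) (max (P v + D) (P (a e))) := by rw [hf]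
    have hfb : f (b e) = min (P u - D) (max (P v + D) (P (b e))) := by rw [hf]
    rw [← hfa, ← hfb] at hcl
    have hce := (hc e).le
    nlinarith [hcl, hce]
  have hfLP : f ⬝ᵥ (lapM a b c).mulVec P = (γ - 1) * R := by
    rw [hLPb, dotProduct_comm, incv_dot, hfu, hfv, hD]
    linarith
  -- dual bound in the quotient graph
  have hbJ : (lapM (fun e => π (a e)) (fun e => π (b e)) c).mulVec
      (LpJ.mulVec (incv s t)) = incv s t := by
    refine mp_range _ _ c hc hconnJ LpJ hLpJ (incv s t) ?_
    simp [incv, Finset.sum_sub_distrib]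
  have hdual := dual_bound _ LpJ hLJsym
    (lapM_quad_nonneg _ _ c (fun e => (hc e).le)) (incv s t) q hbJ
  have hqst : incv s t ⬝ᵥ q = (γ - 1) * R := by
    rw [incv_dot]
    have hqs : q s = P u - D := by
      have hπu : π u = s := (hs u).mpr hu
      rw [← hπu, hqπ u, hfu]
    have hqt : q t = P v + D := by
      have hπv : π v = t := (ht v).mpr hv
      rw [← hπv, hqπ v, hfv]
    rw [hqs, hqt, hD]
    linarith
  rw [hqst] at hdual
  have hfin : q ⬝ᵥ (lapM (fun e => π (a e)) (fun e => π (b e)) c).mulVec q ≤ (γ - 1) * R :=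
    le_trans henergy (le_of_eq hfLP)
  linarith
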